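/- arXiv:1110.0554 — 5 statements merged into one kernel-verified Lean document; each statement's English description precedes it below -/
import Mathlib

section
/- An object (M,u,N) of Mor(C) is isomorphic to the zero object in the quotient category B(C) = Mor(C)/X if and only if u is a split monomorphism. -/
open CategoryTheory CategoryTheory.Limits ZeroObject

/-- A morphism in the morphism category `Mor(C) = Arrow C` factors through an object of the
full subcategory `X` of split monomorphisms. -/
def FactorsThroughSplitMono {C : Type*} [Category C] {A B : Arrow C} (h : A ⟶ B) : Prop :=
  ∃ (P Q : C) (w : P ⟶ Q) (_ : IsSplitMono w) (a : A ⟶ Arrow.mk w) (b : Arrow.mk w ⟶ B),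
    a ≫ b = h

/-- The congruence on `Mor(C)` defining the stable category `B(C) = Mor(C)/X`. -/
def bRel (C : Type*) [Category C] [Preadditive C] : HomRel (Arrow C) :=
  fun {A B} f g =>
    ∃ h : A ⟶ B, FactorsThroughSplitMono h ∧
      f.left = g.left + h.left ∧ f.right = g.right + h.right

/-- Auxiliary: along the equivalence closure of the comp-closure of `bRel`, the difference of
left components is of the form `A.hom ≫ s`. -/
lemma bRel_key {C : Type*} [Category C] [Preadditive C] {A B : Arrow C} {f g : A ⟶ B}
    (h : Relation.EqvGen (@CategoryTheory.HomRel.CompClosure _ _ (bRel C) A B) f g) :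
    ∃ s : A.right ⟶ B.left, A.hom ≫ s = f.left - g.left := by
  induction h with
  | rel f g hfg =>
      obtain ⟨_, _, p, m₁, m₂, q, hm⟩ := hfg
      obtain ⟨h, ⟨P, Q, w, hw, c, d, hcd⟩, hl, hr⟩ := hm
      refine ⟨p.right ≫ c.right ≫ retraction w ≫ d.left ≫ q.left, ?_⟩
      have h1 : A.hom ≫ p.right ≫ c.right ≫ retraction w ≫ d.left ≫ q.left
          = p.left ≫ (c.left ≫ d.left) ≫ q.left := by
        rw [← Arrow.w_assoc p, ← Arrow.w_assoc c]
        simp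
      have h2 : c.left ≫ d.left = h.left := by
        rw [← hcd]; rfl
      rw [h1, h2]
      simp [hl, Preadditive.add_comp, Preadditive.comp_add]
  | refl f => exact ⟨0, by simp⟩
  | symm f g _ ih =>
      obtain ⟨s, hs⟩ := ih
      exact ⟨-s, by simp [hs]⟩
  | trans f g k _ _ ih₁ ih₂ =>
      obtain ⟨s₁, hs₁⟩ := ih₁
      obtain ⟨s₂, hs₂⟩ := ih₂
      exact ⟨s₁ + s₂, by simp [hs₁, hs₂]⟩

/-- An object `(M,u,N)` of `Mor(C)` is isomorphic to the zero object in the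
quotient category `B(C) = Mor(C)/X` if and only if `u` is a split monomorphism. -/
theorem statement1 {C : Type*} [Category C] [Preadditive C] [HasZeroObject C]
    {M N : C} (u : M ⟶ N) :
    Nonempty ((Quotient.functor (bRel C)).obj (Arrow.mk u) ≅
        (Quotient.functor (bRel C)).obj (Arrow.mk (0 : (0 : C) ⟶ (0 : C)))) ↔
      IsSplitMono u := by
  constructor
  · rintro ⟨φ⟩
    obtain ⟨a, ha⟩ := (Quotient.functor (bRel C)).map_surjective φ.hom
    obtain ⟨b, hb⟩ := (Quotient.functor (bRel C)).map_surjective φ.inv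
    have hcomp : (Quotient.functor (bRel C)).map (a ≫ b)
        = (Quotient.functor (bRel C)).map (𝟙 (Arrow.mk u)) := by
      rw [Functor.map_comp, ha, hb, φ.hom_inv_id, CategoryTheory.Functor.map_id]
    have h3 : Relation.EqvGen
        (@CategoryTheory.HomRel.CompClosure _ _ (bRel C) (Arrow.mk u) (Arrow.mk u))
        (a ≫ b) (𝟙 (Arrow.mk u)) := Quot.eqvGen_exact hcomp
    obtain ⟨s, hs⟩ := bRel_key h3
    have hz : a.left = 0 := (isZero_zero C).eq_of_tgt _ _
    have hab : (a ≫ b).left = 0 := by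
      rw [Arrow.comp_left, hz, Limits.zero_comp]
    rw [hab] at hs
    refine IsSplitMono.mk' ⟨-s, ?_⟩
    have h4 : u ≫ s = -𝟙 M := by simpa using hs
    show u ≫ (-s) = 𝟙 M
    rw [Preadditive.comp_neg, h4, neg_neg]
  · intro hu
    let a : Arrow.mk u ⟶ Arrow.mk (0 : (0 : C) ⟶ (0 : C)) :=
      Arrow.homMk (u := (0 : M ⟶ (0 : C))) (v := (0 : N ⟶ (0 : C))) (by simp)
    let b : Arrow.mk (0 : (0 : C) ⟶ (0 : C)) ⟶ Arrow.mk u :=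
      Arrow.homMk (u := (0 : (0 : C) ⟶ M)) (v := (0 : (0 : C) ⟶ N)) (by simp)
    have key1 : bRel C (𝟙 (Arrow.mk u)) (a ≫ b) := by
      refine ⟨𝟙 _, ⟨M, N, u, hu, 𝟙 _, 𝟙 _, by simp⟩, ?_, ?_⟩ <;>
        simp [a, b]
    have key2 : bRel C (𝟙 (Arrow.mk (0 : (0 : C) ⟶ (0 : C)))) (b ≫ a) := by
      refine ⟨𝟙 _, ⟨(0 : C), (0 : C), (0 : (0 : C) ⟶ (0 : C)),
        IsSplitMono.mk' ⟨0, (isZero_zero C).eq_of_src _ _⟩, 𝟙 _, 𝟙 _, by simp⟩, ?_, ?_⟩ <;>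
        simp [a, b]
    refine ⟨⟨(Quotient.functor (bRel C)).map a, (Quotient.functor (bRel C)).map b, ?_, ?_⟩⟩
    · rw [← Functor.map_comp, ← CategoryTheory.Functor.map_id]
      exact (CategoryTheory.Quotient.sound _ key1).symm
    · rw [← Functor.map_comp, ← CategoryTheory.Functor.map_id]
      exact (CategoryTheory.Quotient.sound _ key2).symm
end

section
/- If C is an abelian category, then the Freyd category B(C) = Mor(C)/X (quotient by split monomorphisms) is equivalent to the category of right-exact chain complexes M → N → P → 0 in C, taken up to chain homotopy equivalence. -/
open CategoryTheory CategoryTheory.Limits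

/-- The Freyd category `B(C) = Mor(C)/X`. -/
def BCat (C : Type*) [Category C] [Preadditive C] :=
  CategoryTheory.Quotient (bRel C)

noncomputable instance (C : Type*) [Category C] [Preadditive C] : Category (BCat C) :=
  inferInstanceAs (Category (CategoryTheory.Quotient (bRel C)))

variable (C : Type*) [Category C] [Abelian C]

/-- The category of right exact sequences `M → N → P → 0` in `C`:
short complexes `M → N → P` which are exact at `N` and with `N → P` an epimorphism. -/
def RightExactCat :=
  CategoryTheory.ObjectProperty.FullSubcategory (fun S : ShortComplex C => S.Exact ∧ Epi S.g)

instance : Category (RightExactCat C) :=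
  inferInstanceAs (Category (CategoryTheory.ObjectProperty.FullSubcategory _))

/-- The chain homotopy relation on morphisms of right exact sequences
`M → N → P → 0` (the complexes being extended by zero on the right). -/
def htpyRel : HomRel (RightExactCat C) :=
  fun {S T} φ ψ =>
    ∃ (α : S.obj.X₂ ⟶ T.obj.X₁) (β : S.obj.X₃ ⟶ T.obj.X₂),
      φ.hom.τ₁ - ψ.hom.τ₁ = S.obj.f ≫ α ∧
      φ.hom.τ₂ - ψ.hom.τ₂ = α ≫ T.obj.f + S.obj.g ≫ β ∧
      φ.hom.τ₃ - ψ.hom.τ₃ = β ≫ T.obj.g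

/-- The functor sending `u : M ⟶ N` to the right exact complex `M ⟶ N ⟶ coker u ⟶ 0`. -/
noncomputable def Ffun : Arrow C ⥤ RightExactCat C where
  obj A := ⟨ShortComplex.mk A.hom (cokernel.π A.hom) (cokernel.condition _),
    ShortComplex.exact_of_g_is_cokernel _ (cokernelIsCokernel A.hom), inferInstance⟩
  map {A B} f := ⟨⟨f.left, f.right, cokernel.map _ _ f.left f.right f.w.symm, f.w, by simp⟩⟩
  map_id A := by
    apply ObjectProperty.hom_ext
    apply ShortComplex.hom_ext
    · rfl
    · rfl
    · conv_rhs => change 𝟙 (cokernel A.hom)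
      apply coequalizer.hom_ext
      simp
  map_comp {X Y Z} f g := by
    apply ObjectProperty.hom_ext
    apply ShortComplex.hom_ext
    · rfl
    · rfl
    · conv_rhs => change cokernel.map X.hom Y.hom f.left f.right f.w.symm ≫
        cokernel.map Y.hom Z.hom g.left g.right g.w.symm
      apply coequalizer.hom_ext
      simp

/-- The functor sending a right exact complex `M ⟶ N ⟶ P ⟶ 0` to the arrow `M ⟶ N`. -/
def Gfun : RightExactCat C ⥤ Arrow C where
  obj S := Arrow.mk S.obj.f
  map {S T} φ := Arrow.homMk (u := φ.hom.τ₁) (v := φ.hom.τ₂) φ.hom.comm₁₂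
  map_id S := by apply Arrow.hom_ext <;> rfl
  map_comp f g := by apply Arrow.hom_ext <;> rfl

noncomputable def FGiso : Ffun C ⋙ Gfun C ≅ 𝟭 (Arrow C) :=
  NatIso.ofComponents (fun A => Iso.refl A) (by
    intro A B f
    apply Arrow.hom_ext <;> simp [Ffun, Gfun] <;> erw [Category.comp_id, Category.id_comp] <;> rfl)

noncomputable def cokerIso (S : RightExactCat C) : cokernel S.obj.f ≅ S.obj.X₃ :=
  haveI : Epi S.obj.g := S.property.2
  IsColimit.coconePointUniqueUpToIso (cokernelIsCokernel S.obj.f) S.property.1.gIsCokernel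

lemma cokerIso_hom (S : RightExactCat C) :
    cokernel.π S.obj.f ≫ (cokerIso C S).hom = S.obj.g := by
  haveI : Epi S.obj.g := S.property.2
  exact IsColimit.comp_coconePointUniqueUpToIso_hom (cokernelIsCokernel S.obj.f) _
    WalkingParallelPair.one

noncomputable def GFcomp (S : RightExactCat C) : (Gfun C ⋙ Ffun C).obj S ≅ S :=
  let e : ((Gfun C ⋙ Ffun C).obj S).obj ≅ S.obj :=
    ShortComplex.isoMk (Iso.refl _) (Iso.refl _) (cokerIso C S) (by simp [Gfun, Ffun])
      (by simp [Gfun, Ffun, cokerIso_hom])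
  ⟨⟨e.hom⟩, ⟨e.inv⟩, InducedCategory.hom_ext e.hom_inv_id, InducedCategory.hom_ext e.inv_hom_id⟩

noncomputable def GFiso : Gfun C ⋙ Ffun C ≅ 𝟭 (RightExactCat C) :=
  NatIso.ofComponents (GFcomp C) (by
    intro S T φ
    apply ObjectProperty.hom_ext
    apply ShortComplex.hom_ext
    · show φ.hom.τ₁ ≫ 𝟙 _ = 𝟙 _ ≫ φ.hom.τ₁
      simp
    · show φ.hom.τ₂ ≫ 𝟙 _ = 𝟙 _ ≫ φ.hom.τ₂
      simp
    · show cokernel.map S.obj.f T.obj.f φ.hom.τ₁ φ.hom.τ₂ φ.hom.comm₁₂.symm ≫ (cokerIso C T).hom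
        = (cokerIso C S).hom ≫ φ.hom.τ₃
      apply coequalizer.hom_ext
      rw [← Category.assoc, ← Category.assoc]
      rw [show cokernel.π S.obj.f ≫ cokernel.map S.obj.f T.obj.f φ.hom.τ₁ φ.hom.τ₂ φ.hom.comm₁₂.symm
        = φ.hom.τ₂ ≫ cokernel.π T.obj.f from by simp]
      rw [cokerIso_hom, Category.assoc, cokerIso_hom, φ.hom.comm₂₃])

lemma Ffun_resp : ∀ (A B : Arrow C) (f g : A ⟶ B), bRel C f g →
    (Ffun C ⋙ Quotient.functor (htpyRel C)).map f =
    (Ffun C ⋙ Quotient.functor (htpyRel C)).map g := by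
  rintro A B f g ⟨h, ⟨P, Q, w, hw, a, b, hab⟩, hl, hr⟩
  haveI := hw
  apply CategoryTheory.Quotient.sound
  set α : A.right ⟶ B.left := a.right ≫ retraction w ≫ b.left with hα
  have hAα : A.hom ≫ α = h.left := by
    rw [hα, ← Category.assoc, ← Arrow.w a, Category.assoc]
    show a.left ≫ w ≫ retraction w ≫ b.left = h.left
    rw [IsSplitMono.id_assoc, ← hab]
    rfl
  set d : A.right ⟶ B.right := h.right - α ≫ (show B.left ⟶ B.right from B.hom) with hd
  have key : A.hom ≫ d = 0 := by
    rw [hd, Preadditive.comp_sub, ← Category.assoc, hAα, Arrow.w h, sub_self]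
  set β : cokernel A.hom ⟶ B.right := cokernel.desc A.hom d key with hβ
  refine ⟨α, β, ?_, ?_, ?_⟩
  · show f.left - g.left = A.hom ≫ α
    rw [hl, hAα]; abel
  · show f.right - g.right = α ≫ (show B.left ⟶ B.right from B.hom) + (show A.right ⟶ cokernel A.hom from cokernel.π A.hom) ≫ β
    rw [hr, hβ, cokernel.π_desc, hd]; abel
  · show cokernel.map A.hom B.hom f.left f.right f.w.symm -
        cokernel.map A.hom B.hom g.left g.right g.w.symm = β ≫ cokernel.π B.hom
    apply coequalizer.hom_ext
    rw [Preadditive.comp_sub]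
    show cokernel.π A.hom ≫ cokernel.map _ _ _ _ _ - cokernel.π A.hom ≫ cokernel.map _ _ _ _ _
      = cokernel.π A.hom ≫ β ≫ cokernel.π B.hom
    rw [cokernel.π_desc, cokernel.π_desc, ← Category.assoc, hβ, cokernel.π_desc, hd,
      Preadditive.sub_comp, Category.assoc, cokernel.condition, comp_zero, sub_zero,
      hr, Preadditive.add_comp]
    abel

lemma Gfun_resp : ∀ (S T : RightExactCat C) (φ ψ : S ⟶ T), htpyRel C φ ψ →
    (Gfun C ⋙ Quotient.functor (bRel C)).map φ =
    (Gfun C ⋙ Quotient.functor (bRel C)).map ψ := by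
  rintro S T φ ψ ⟨α, β, e₁, e₂, e₃⟩
  apply CategoryTheory.Quotient.sound
  refine ⟨Arrow.homMk (u := S.obj.f ≫ α) (v := α ≫ T.obj.f + S.obj.g ≫ β) ?_, ?_, ?_, ?_⟩
  · dsimp only [Gfun]
    show (S.obj.f ≫ α) ≫ T.obj.f = S.obj.f ≫ (α ≫ T.obj.f + S.obj.g ≫ β)
    rw [Preadditive.comp_add, ← Category.assoc, ← Category.assoc,
      S.obj.zero]
    simp
  · refine ⟨T.obj.X₁, T.obj.X₁ ⊞ S.obj.X₃, biprod.inl, inferInstance,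
      Arrow.homMk (u := S.obj.f ≫ α) (v := biprod.lift α S.obj.g) ?_,
      Arrow.homMk (u := 𝟙 T.obj.X₁) (v := biprod.desc T.obj.f β) ?_, ?_⟩
    · apply biprod.hom_ext
      · simp [Gfun]
      · simp [Gfun, S.obj.zero]
    · simp [Gfun]
    · apply Arrow.hom_ext
      · simp [Gfun]
      · simp [Gfun]
  · show φ.hom.τ₁ = ψ.hom.τ₁ + S.obj.f ≫ α
    rw [← e₁]; abel
  · show φ.hom.τ₂ = ψ.hom.τ₂ + (α ≫ T.obj.f + S.obj.g ≫ β)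
    rw [← e₂]; abel

noncomputable def Fhat : BCat C ⥤ CategoryTheory.Quotient (htpyRel C) :=
  CategoryTheory.Quotient.lift _ (Ffun C ⋙ Quotient.functor (htpyRel C)) (Ffun_resp C)

noncomputable def Ghat : CategoryTheory.Quotient (htpyRel C) ⥤ BCat C :=
  CategoryTheory.Quotient.lift _ (Gfun C ⋙ Quotient.functor (bRel C)) (Gfun_resp C)

/-- For an abelian category `C`, the Freyd category `B(C) = Mor(C)/X` is
equivalent to the category of exact complexes `M → N → P → 0` in `C` up to chain homotopy. -/
theorem statement5 :
    Nonempty (BCat C ≌ CategoryTheory.Quotient (htpyRel C)) := by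
  refine ⟨CategoryTheory.Equivalence.mk (Fhat C) (Ghat C) ?_ ?_⟩
  · refine (CategoryTheory.Quotient.natIsoLift _ ?_).symm
    exact (Functor.isoWhiskerRight (Quotient.lift.isLift _ (Ffun C ⋙ Quotient.functor (htpyRel C))
        (Ffun_resp C)) (Ghat C)) ≪≫
      Functor.isoWhiskerLeft (Ffun C) (Quotient.lift.isLift _ (Gfun C ⋙ Quotient.functor (bRel C))
        (Gfun_resp C)) ≪≫
      Functor.isoWhiskerRight (FGiso C) (Quotient.functor (bRel C))
  · refine CategoryTheory.Quotient.natIsoLift _ ?_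
    exact (Functor.isoWhiskerRight (Quotient.lift.isLift _ (Gfun C ⋙ Quotient.functor (bRel C))
        (Gfun_resp C)) (Fhat C)) ≪≫
      Functor.isoWhiskerLeft (Gfun C) (Quotient.lift.isLift _ (Ffun C ⋙ Quotient.functor (htpyRel C))
        (Ffun_resp C)) ≪≫
      Functor.isoWhiskerRight (GFiso C) (Quotient.functor (htpyRel C))
end

section
/- Let R be a ring with a complete family of pairwise orthogonal idempotents (e_i)_{i∈I} (a ring with enough idempotents, R = ⊕_i Re_i = ⊕_i e_iR). If the category of unitary left R-modules is locally coherent, then a finitely presented unitary left R-module X is a simple object in the category of finitely presented unitary left R-modules (i.e., has no nonzero proper finitely presented submodules) if and only if X is a simple R-module. -/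
noncomputable section

universe u

variable (R : Type u) [NonUnitalRing R]

/-- A left module over a non-unital ring `R`. -/
class LeftRMod (M : Type u) [AddCommGroup M] extends SMul R M where
  smul_add : ∀ (r : R) (m n : M), r • (m + n) = r • m + r • n
  add_smul : ∀ (r s : R) (m : M), (r + s) • m = r • m + s • m
  mul_smul : ∀ (r s : R) (m : M), (r * s) • m = r • (s • m)

/-- `R` is a left module over itself by multiplication. -/
instance : LeftRMod R R where
  toSMul := inferInstance
  smul_add := mul_add
  add_smul := add_mul
  mul_smul := mul_assoc

/-- A module `M` is unitary if `RM = M`, i.e. every element is a finite sum `Σ rᵢ • xᵢ`. -/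
def IsUnitary (M : Type u) [AddCommGroup M] [LeftRMod R M] : Prop :=
  ∀ m : M, ∃ (n : ℕ) (r : Fin n → R) (x : Fin n → M), m = ∑ i, r i • x i

/-- A subset of a module which is a submodule. -/
def IsSubMod {M : Type u} [AddCommGroup M] [LeftRMod R M] (S : Set M) : Prop :=
  (0 : M) ∈ S ∧ (∀ a ∈ S, ∀ b ∈ S, a + b ∈ S) ∧ (∀ a ∈ S, -a ∈ S) ∧
    ∀ (r : R), ∀ a ∈ S, r • a ∈ S

/-- `R`-linear maps between modules over the non-unital ring `R`. -/
structure RLin (M N : Type u) [AddCommGroup M] [LeftRMod R M]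
    [AddCommGroup N] [LeftRMod R N] where
  toFun : M → N
  map_add : ∀ a b, toFun (a + b) = toFun a + toFun b
  map_smul : ∀ (r : R) (a : M), toFun (r • a) = r • toFun a

/-- The principal left ideal `Re` of `R`, as a type. -/
def ReT (e : R) : Type u := {x : R // ∃ r : R, x = r * e}

instance (e : R) : Zero (ReT R e) := ⟨⟨0, 0, (zero_mul e).symm⟩⟩
instance (e : R) : Add (ReT R e) :=
  ⟨fun a b => ⟨a.1 + b.1, by
    obtain ⟨r, hr⟩ := a.2; obtain ⟨s, hs⟩ := b.2
    exact ⟨r + s, by rw [hr, hs, add_mul]⟩⟩⟩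
instance (e : R) : Neg (ReT R e) :=
  ⟨fun a => ⟨-a.1, by obtain ⟨r, hr⟩ := a.2; exact ⟨-r, by rw [hr, neg_mul]⟩⟩⟩

instance (e : R) : AddCommGroup (ReT R e) where
  add_assoc a b c := Subtype.ext (add_assoc _ _ _)
  zero_add a := Subtype.ext (zero_add _)
  add_zero a := Subtype.ext (add_zero _)
  neg_add_cancel a := Subtype.ext (neg_add_cancel _)
  add_comm a b := Subtype.ext (add_comm _ _)
  nsmul := nsmulRec
  zsmul := zsmulRec

instance (e : R) : LeftRMod R (ReT R e) where
  smul r a := ⟨r * a.1, by obtain ⟨s, hs⟩ := a.2; exact ⟨r * s, by rw [hs, mul_assoc]⟩⟩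
  smul_add r a b := Subtype.ext (mul_add _ _ _)
  add_smul r s a := Subtype.ext (add_mul _ _ _)
  mul_smul r s a := Subtype.ext (mul_assoc _ _ _)

/-- Finite direct sums of modules, as pi types. -/
instance {α : Type u} (M : α → Type u) [∀ j, AddCommGroup (M j)]
    [∀ j, LeftRMod R (M j)] : LeftRMod R (∀ j, M j) where
  smul r f := fun j => r • f j
  smul_add r a b := funext fun j => LeftRMod.smul_add r (a j) (b j)
  add_smul r s a := funext fun j => LeftRMod.add_smul r s (a j)
  mul_smul r s a := funext fun j => LeftRMod.mul_smul r s (a j)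

variable {I : Type u} (e : I → R)

/-- The finite direct sum `⊕_{j ∈ F} Re_j`. -/
def PiRe (F : Finset I) : Type u := ∀ j : F, ReT R (e j)

instance (F : Finset I) : AddCommGroup (PiRe R e F) :=
  inferInstanceAs (AddCommGroup (∀ j : F, ReT R (e j)))
instance (F : Finset I) : LeftRMod R (PiRe R e F) :=
  inferInstanceAs (LeftRMod R (∀ j : F, ReT R (e j)))

/-- A subset `S` of a module `M` is a finitely presented subobject: there is an exact
sequence `⊕_{j∈F₁} Re_j → ⊕_{j∈F₂} Re_j → M` whose image is `S`. -/
def PresentedSub {M : Type u} [AddCommGroup M] [LeftRMod R M] (S : Set M) : Prop :=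
  ∃ (F₁ F₂ : Finset I) (φ : RLin R (PiRe R e F₁) (PiRe R e F₂))
    (π : RLin R (PiRe R e F₂) M),
    Set.range π.toFun = S ∧ ∀ y, π.toFun y = 0 ↔ ∃ x, φ.toFun x = y

/-- A module `X` is finitely presented: there is an exact sequence
`⊕_{j∈F₁} Re_j → ⊕_{j∈F₂} Re_j → X → 0`. -/
def FinPresented (X : Type u) [AddCommGroup X] [LeftRMod R X] : Prop :=
  PresentedSub R e (Set.univ : Set X)

/-- A subset `S` of a module `M` is a finitely generated subobject: it is the image of
some finite direct sum `⊕_{j∈F} Re_j`. -/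
def FGSub {M : Type u} [AddCommGroup M] [LeftRMod R M] (S : Set M) : Prop :=
  ∃ (F : Finset I) (π : RLin R (PiRe R e F) M), Set.range π.toFun = S

section Aux

variable {M : Type u} [AddCommGroup M] [LeftRMod R M]

lemma s7_zero_smul (m : M) : (0 : R) • m = 0 := by
  have h := LeftRMod.add_smul (0 : R) 0 m
  rw [add_zero] at h
  have h2 : (0:R) • m + 0 = (0:R) • m + (0:R) • m := by rw [add_zero]; exact h
  exact (add_left_cancel h2).symm

lemma s7_neg_smul (r : R) (m : M) : (-r) • m = -(r • m) := by
  have h := LeftRMod.add_smul r (-r) m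
  rw [add_neg_cancel, s7_zero_smul] at h
  exact (neg_eq_of_add_eq_zero_right h.symm).symm

lemma s7_sum_smul {α : Type*} (s : Finset α) (f : α → R) (m : M) :
    (∑ i ∈ s, f i) • m = ∑ i ∈ s, f i • m :=
  map_sum (AddMonoidHom.mk' (fun r : R => r • m) (fun a b => LeftRMod.add_smul a b m)) f s

lemma s7_smul_sum {α : Type*} (s : Finset α) (r : R) (g : α → M) :
    r • (∑ i ∈ s, g i) = ∑ i ∈ s, r • g i :=
  map_sum (AddMonoidHom.mk' (fun m : M => r • m) (fun a b => LeftRMod.smul_add r a b)) g s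

open Classical in
lemma s7_unitary_decomp
    (orth : ∀ i j, i ≠ j → e i * e j = 0)
    (complete : ∀ r : R, ∃ s : Finset I,
      (∑ i ∈ s, e i * r) = r ∧ (∑ i ∈ s, r * e i) = r)
    (hM : IsUnitary R M) (m : M) : ∃ F : Finset I, (∑ j ∈ F, e j) • m = m := by
  obtain ⟨n, r, x, hm⟩ := hM m
  choose s hs _h using fun i => complete (r i)
  refine ⟨Finset.univ.biUnion s, ?_⟩
  have key : ∀ i, (∑ j ∈ Finset.univ.biUnion s, e j * r i) = r i := by
    intro i
    rw [← Finset.sum_subset (Finset.subset_biUnion_of_mem s (Finset.mem_univ i))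
      (fun j _ hj => ?_)]
    · exact hs i
    · have h1 : e j * r i = e j * ∑ k ∈ s i, e k * r i := by rw [hs i]
      rw [h1, Finset.mul_sum]
      refine Finset.sum_eq_zero fun k hk => ?_
      rw [← mul_assoc, orth j k (fun h => hj (h ▸ hk)), zero_mul]
  calc (∑ j ∈ Finset.univ.biUnion s, e j) • m
      = ∑ i, (∑ j ∈ Finset.univ.biUnion s, e j) • (r i • x i) := by
        rw [hm, s7_smul_sum]
    _ = ∑ i, ((∑ j ∈ Finset.univ.biUnion s, e j) * r i) • x i :=
        Finset.sum_congr rfl fun i _ => (LeftRMod.mul_smul _ _ _).symm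
    _ = ∑ i, r i • x i :=
        Finset.sum_congr rfl fun i _ => by rw [Finset.sum_mul, key i]
    _ = m := hm.symm

end Aux

/-- let `R` be a ring with enough idempotents, with complete family of
pairwise orthogonal idempotents `(e_i)`.  If the category of unitary left `R`-modules is
locally coherent, then a finitely presented unitary left `R`-module `X` is a simple object
of the category of finitely presented unitary left `R`-modules (it has no nonzero proper
finitely presented submodules) if and only if `X` is a simple `R`-module. -/
theorem statement7
    (idem : ∀ i, e i * e i = e i)
    (orth : ∀ i j, i ≠ j → e i * e j = 0)
    (complete : ∀ r : R, ∃ s : Finset I,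
      (∑ i ∈ s, e i * r) = r ∧ (∑ i ∈ s, r * e i) = r)
    (loccoh : ∀ (M : Type u) [AddCommGroup M] [LeftRMod R M], IsUnitary R M →
      FinPresented R e M → ∀ S : Set M, IsSubMod R S → FGSub R e S → PresentedSub R e S)
    (X : Type u) [AddCommGroup X] [LeftRMod R X]
    (hXu : IsUnitary R X) (hXfp : FinPresented R e X) :
    (Nontrivial X ∧ ∀ S : Set X, IsSubMod R S → PresentedSub R e S →
        S = {0} ∨ S = Set.univ) ↔
      (Nontrivial X ∧ ∀ S : Set X, IsSubMod R S → S = {0} ∨ S = Set.univ) := by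
  constructor
  · rintro ⟨hnt, hsimple⟩
    refine ⟨hnt, fun S hS => ?_⟩
    by_cases hS0 : S = {0}
    · exact Or.inl hS0
    right
    have hex : ∃ x ∈ S, x ≠ 0 := by
      by_contra h
      push_neg at h
      exact hS0 (Set.eq_singleton_iff_unique_mem.mpr
        ⟨hS.1, fun y hy => h y hy⟩)
    obtain ⟨x, hxS, hx0⟩ := hex
    obtain ⟨F, hF⟩ := s7_unitary_decomp R e orth complete hXu x
    set Rx : Set X := {y | ∃ r : R, y = r • x} with hRx
    have hxRx : x ∈ Rx := ⟨∑ j ∈ F, e j, hF.symm⟩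
    have hsub : IsSubMod R Rx := by
      refine ⟨⟨0, (s7_zero_smul R x).symm⟩, ?_, ?_, ?_⟩
      · rintro a ⟨r, rfl⟩ b ⟨s, rfl⟩
        exact ⟨r + s, (LeftRMod.add_smul r s x).symm⟩
      · rintro a ⟨r, rfl⟩
        exact ⟨-r, (s7_neg_smul R r x).symm⟩
      · rintro r a ⟨s, rfl⟩
        exact ⟨r * s, (LeftRMod.mul_smul r s x).symm⟩
    have hRxS : Rx ⊆ S := by
      rintro y ⟨r, rfl⟩
      exact hS.2.2.2 r x hxS
    have hfg : FGSub R e Rx := by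
      refine ⟨F, ⟨fun a => ∑ j : F, (a j).1 • x, ?_, ?_⟩, ?_⟩
      · intro a b
        show ∑ j : F, ((a j).1 + (b j).1) • x = _
        calc ∑ j : F, ((a j).1 + (b j).1) • x
            = ∑ j : F, ((a j).1 • x + (b j).1 • x) :=
              Finset.sum_congr rfl fun j _ => LeftRMod.add_smul _ _ _
          _ = _ := Finset.sum_add_distrib
      · intro r a
        show ∑ j : F, (r * (a j).1) • x = _
        calc ∑ j : F, (r * (a j).1) • x
            = ∑ j : F, r • ((a j).1 • x) :=
              Finset.sum_congr rfl fun j _ => LeftRMod.mul_smul _ _ _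
          _ = r • ∑ j : F, (a j).1 • x := (s7_smul_sum R _ r _).symm
      · ext y
        constructor
        · rintro ⟨a, rfl⟩
          exact ⟨∑ j : F, (a j).1, (s7_sum_smul R _ _ x).symm⟩
        · rintro ⟨r, rfl⟩
          refine ⟨fun j => ⟨r * e j, r, rfl⟩, ?_⟩
          show ∑ j : F, (r * e (j : I)) • x = r • x
          calc ∑ j : F, (r * e (j : I)) • x
              = ∑ j : F, r • (e (j : I) • x) :=
                Finset.sum_congr rfl fun j _ => LeftRMod.mul_smul _ _ _
            _ = r • ∑ j : F, e (j : I) • x := (s7_smul_sum R _ r _).symm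
            _ = r • ((∑ j : F, e (j : I)) • x) := by rw [s7_sum_smul]
            _ = r • ((∑ j ∈ F, e j) • x) := by rw [Finset.sum_coe_sort F (fun j => e j)]
            _ = r • x := by rw [hF]
    have hpres := loccoh X hXu hXfp Rx hsub hfg
    rcases hsimple Rx hsub hpres with h0 | huniv
    · rw [h0] at hxRx; exact absurd hxRx hx0
    · exact Set.eq_univ_of_univ_subset (huniv ▸ hRxS)
  · rintro ⟨hnt, hsimple⟩
    exact ⟨hnt, fun S hS _ => hsimple S hS⟩
end
end

section
/- For each n ∈ ℕ, the right comodule quotient E_r(n)/F·(n,n) of the incidence coalgebra C_ℕ is isomorphic as a right C_ℕ-comodule to E_r(n+1), and the left comodule quotient E_l(n)/F·(n,n) is isomorphic as a left comodule to E_l(n−1) (for n ≥ 1). -/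
open TensorProduct

noncomputable section

variable (F : Type*) [Field F]

abbrev SegN := {p : ℕ × ℕ // p.1 ≤ p.2}

/-- The underlying space of the incidence coalgebra `C_ℕ`. -/
abbrev CN := SegN →₀ F

/-- The comultiplication of `C_ℕ`: `Δ((m,n)) = Σ_{m ≤ p ≤ n} (m,p) ⊗ (p,n)`. -/
def Δℕ : CN F →ₗ[F] CN F ⊗[F] CN F :=
  Finsupp.lift _ F _ fun b =>
    ∑ z ∈ (Finset.Icc b.1.1 b.1.2).attach,
      Finsupp.single (⟨(b.1.1, z.1), (Finset.mem_Icc.mp z.2).1⟩ : SegN) (1 : F) ⊗ₜ[F]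
        Finsupp.single (⟨(z.1, b.1.2), (Finset.mem_Icc.mp z.2).2⟩ : SegN) (1 : F)

/-- `E_r(n)`: the span of the basis elements `(n,p)`, `p ≥ n`. -/
def Er (n : ℕ) : Submodule F (CN F) :=
  Submodule.span F {v | ∃ (p : ℕ) (h : n ≤ p), v = Finsupp.single (⟨(n, p), h⟩ : SegN) (1 : F)}

/-- `E_l(n)`: the span of the basis elements `(k,n)`, `k ≤ n`. -/
def El (n : ℕ) : Submodule F (CN F) :=
  Submodule.span F {v | ∃ (k : ℕ) (h : k ≤ n), v = Finsupp.single (⟨(k, n), h⟩ : SegN) (1 : F)}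

/-- The line `F·(n,n)` spanned by the diagonal basis element `(n,n)`. -/
def diagLine (n : ℕ) : Submodule F (CN F) :=
  Submodule.span F {Finsupp.single (⟨(n, n), le_refl n⟩ : SegN) (1 : F)}

lemma lift_single {M : Type*} [AddCommMonoid M] [Module F M] (f : SegN → M) (b : SegN) (c : F) :
    Finsupp.lift M F SegN f (Finsupp.single b c) = c • f b := by
  rw [Finsupp.lift_apply]
  exact Finsupp.sum_single_index (zero_smul F (f b))

/-- `sgl a b` is the basis element `(a,b)` if `a ≤ b`, else `0`. -/
def sgl (a b : ℕ) : CN F := if h : a ≤ b then Finsupp.single (⟨(a, b), h⟩ : SegN) (1 : F) else 0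

lemma sgl_le {a b : ℕ} (h : a ≤ b) : sgl F a b = Finsupp.single (⟨(a, b), h⟩ : SegN) (1 : F) :=
  dif_pos h

lemma sgl_gt {a b : ℕ} (h : b < a) : sgl F a b = 0 := dif_neg (not_le.mpr h)

lemma Δ_sgl (a b : ℕ) :
    Δℕ F (sgl F a b) = ∑ z ∈ Finset.Icc a b, sgl F a z ⊗ₜ[F] sgl F z b := by
  by_cases h : a ≤ b
  · rw [sgl_le F h]
    simp only [Δℕ, lift_single, one_smul]
    rw [← Finset.sum_attach (Finset.Icc a b) (fun z => sgl F a z ⊗ₜ[F] sgl F z b)]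
    refine Finset.sum_congr rfl fun z _ => ?_
    rw [sgl_le F (a := a) (b := z.1) (Finset.mem_Icc.mp z.2).1,
        sgl_le F (a := z.1) (b := b) (Finset.mem_Icc.mp z.2).2]
  · rw [sgl_gt F (not_le.mp h), Finset.Icc_eq_empty h, (Δℕ F).map_zero, Finset.sum_empty]

/-- the map `(n,p) ↦ (n+1,p)` (and `(n,n) ↦ 0`), killing everything outside row `n`. -/
def rsh (n : ℕ) : CN F →ₗ[F] CN F :=
  Finsupp.lift _ F _ fun b => if b.1.1 = n then sgl F (n + 1) b.1.2 else 0

lemma rsh_single (n a b : ℕ) (h : a ≤ b) :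
    rsh F n (Finsupp.single (⟨(a, b), h⟩ : SegN) (1 : F)) =
      if a = n then sgl F (n + 1) b else 0 := by
  rw [rsh, lift_single, one_smul]

lemma rsh_sgl (n a b : ℕ) :
    rsh F n (sgl F a b) = if a = n then sgl F (n + 1) b else 0 := by
  by_cases h : a ≤ b
  · rw [sgl_le F h, rsh_single]
  · rw [sgl_gt F (not_le.mp h), map_zero]
    split
    · next heq => rw [sgl_gt F (show b < n + 1 by omega)]
    · rfl

def rinv (n : ℕ) : CN F →ₗ[F] CN F :=
  Finsupp.lift _ F _ fun b => if b.1.1 = n + 1 then sgl F n b.1.2 else 0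

lemma rinv_single (n a b : ℕ) (h : a ≤ b) :
    rinv F n (Finsupp.single (⟨(a, b), h⟩ : SegN) (1 : F)) =
      if a = n + 1 then sgl F n b else 0 := by
  rw [rinv, lift_single, one_smul]

def lsh (n : ℕ) : CN F →ₗ[F] CN F :=
  Finsupp.lift _ F _ fun b => if b.1.2 = n then sgl F b.1.1 (n - 1) else 0

lemma lsh_single (n a b : ℕ) (h : a ≤ b) :
    lsh F n (Finsupp.single (⟨(a, b), h⟩ : SegN) (1 : F)) =
      if b = n then sgl F a (n - 1) else 0 := by
  rw [lsh, lift_single, one_smul]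

lemma lsh_sgl (n a b : ℕ) (hn : 1 ≤ n) :
    lsh F n (sgl F a b) = if b = n then sgl F a (n - 1) else 0 := by
  by_cases h : a ≤ b
  · rw [sgl_le F h, lsh_single]
  · rw [sgl_gt F (not_le.mp h), map_zero]
    split
    · next heq => rw [sgl_gt F (show n - 1 < a by omega)]
    · rfl

def linv (n : ℕ) : CN F →ₗ[F] CN F :=
  Finsupp.lift _ F _ fun b => if b.1.2 = n - 1 then sgl F b.1.1 n else 0

lemma linv_single (n a b : ℕ) (h : a ≤ b) :
    linv F n (Finsupp.single (⟨(a, b), h⟩ : SegN) (1 : F)) =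
      if b = n - 1 then sgl F a n else 0 := by
  rw [linv, lift_single, one_smul]

/-- `E_r(n)/F·(n,n) ≅ E_r(n+1)` as right `C_ℕ`-comodules, and
`E_l(n)/F·(n,n) ≅ E_l(n-1)` as left comodules (for `n ≥ 1`).  This is expressed by
a linear map `ψ` (resp. `φ`) of `C_ℕ` restricting to a surjective comodule map
`E_r(n) → E_r(n+1)` (resp. `E_l(n) → E_l(n-1)`) whose kernel on `E_r(n)` (resp. `E_l(n)`)
is exactly `F·(n,n)`. -/
theorem statement15 (n : ℕ) :
    (∃ ψ : CN F →ₗ[F] CN F,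
      Submodule.map ψ (Er F n) = Er F (n + 1) ∧
      LinearMap.ker ψ ⊓ Er F n = diagLine F n ∧
      ∀ v ∈ Er F n, Δℕ F (ψ v) = LinearMap.rTensor (CN F) ψ (Δℕ F v)) ∧
    (1 ≤ n → ∃ φ : CN F →ₗ[F] CN F,
      Submodule.map φ (El F n) = El F (n - 1) ∧
      LinearMap.ker φ ⊓ El F n = diagLine F n ∧
      ∀ v ∈ El F n, Δℕ F (φ v) = LinearMap.lTensor (CN F) φ (Δℕ F v)) := by
  constructor
  · refine ⟨rsh F n, ?_, ?_, ?_⟩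
    · -- image
      rw [Er, Submodule.map_span]
      apply le_antisymm
      · rw [Submodule.span_le]
        rintro x ⟨v, ⟨p, h, rfl⟩, rfl⟩
        rw [rsh_single, if_pos rfl]
        rcases h.lt_or_eq with h' | h'
        · rw [sgl_le F h']
          exact Submodule.subset_span ⟨p, h', rfl⟩
        · rw [← h', sgl_gt F (Nat.lt_succ_self n)]
          exact (Er F (n + 1)).zero_mem
      · rw [Er, Submodule.span_le]
        rintro x ⟨p, h, rfl⟩
        apply Submodule.subset_span
        refine ⟨Finsupp.single (⟨(n, p), le_of_lt h⟩ : SegN) 1, ⟨p, le_of_lt h, rfl⟩, ?_⟩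
        rw [rsh_single, if_pos rfl, sgl_le F h]
    · -- kernel
      apply le_antisymm
      · rintro v ⟨hker, hEr⟩
        have key : ∀ w ∈ Er F n, rinv F n (rsh F n w) +
            (w ⟨(n, n), le_refl n⟩) • Finsupp.single (⟨(n, n), le_refl n⟩ : SegN) (1 : F) = w := by
          intro w hw
          induction hw using Submodule.span_induction with
          | mem x hx =>
            obtain ⟨p, h, rfl⟩ := hx
            rw [rsh_single, if_pos rfl]
            rcases h.lt_or_eq with h' | h'
            · rw [sgl_le F h', rinv_single, if_pos rfl, sgl_le F h,
                Finsupp.single_eq_of_ne (fun hc => by simp at hc; omega), zero_smul, add_zero]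
            · subst h'
              rw [sgl_gt F (Nat.lt_succ_self n), map_zero, zero_add,
                Finsupp.single_eq_same, one_smul]
          | zero => simp
          | add x y hx hy ihx ihy =>
            rw [map_add, map_add, Finsupp.add_apply, add_smul]
            rw [show rinv F n (rsh F n x) + rinv F n (rsh F n y) +
              ((x ⟨(n,n), le_refl n⟩) • Finsupp.single (⟨(n,n), le_refl n⟩ : SegN) (1:F) +
               (y ⟨(n,n), le_refl n⟩) • Finsupp.single (⟨(n,n), le_refl n⟩ : SegN) (1:F)) =
              (rinv F n (rsh F n x) +
               (x ⟨(n,n), le_refl n⟩) • Finsupp.single (⟨(n,n), le_refl n⟩ : SegN) (1:F)) +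
              (rinv F n (rsh F n y) +
               (y ⟨(n,n), le_refl n⟩) • Finsupp.single (⟨(n,n), le_refl n⟩ : SegN) (1:F)) from by
              abel]
            rw [ihx, ihy]
          | smul a x hx ih =>
            rw [map_smul, map_smul, Finsupp.smul_apply, smul_eq_mul, mul_smul, ← smul_add, ih]
        have hkey := key v hEr
        rw [LinearMap.mem_ker.mp hker, map_zero, zero_add] at hkey
        rw [diagLine]
        exact hkey ▸ Submodule.smul_mem _ _ (Submodule.mem_span_singleton_self _)
      · rw [diagLine, Submodule.span_le, Set.singleton_subset_iff]
        refine Submodule.mem_inf.mpr ⟨?_, ?_⟩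
        · exact LinearMap.mem_ker.mpr
            (by rw [rsh_single, if_pos rfl, sgl_gt F (Nat.lt_succ_self n)])
        · exact Submodule.subset_span ⟨n, le_refl n, rfl⟩
    · -- comodule map
      intro v hv
      induction hv using Submodule.span_induction with
      | mem x hx =>
        obtain ⟨p, h, rfl⟩ := hx
        rw [rsh_single, if_pos rfl, ← sgl_le F h, Δ_sgl, Δ_sgl, map_sum]
        have split : Finset.Icc n p = insert n (Finset.Icc (n + 1) p) := by
          rw [Finset.Icc_add_one_left_eq_Ioc, Finset.Ioc_insert_left h]
        rw [split, Finset.sum_insert (by simp), LinearMap.rTensor_tmul,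
          rsh_sgl F n n n, if_pos rfl, sgl_gt F (Nat.lt_succ_self n), zero_tmul, zero_add]
        refine Finset.sum_congr rfl fun z hz => ?_
        rw [LinearMap.rTensor_tmul, rsh_sgl F n n z, if_pos rfl]
      | zero => simp
      | add x y hx hy ihx ihy => simp only [map_add, ihx, ihy]
      | smul a x hx ih => simp only [map_smul, ih]
  · intro hn
    refine ⟨lsh F n, ?_, ?_, ?_⟩
    · rw [El, Submodule.map_span]
      apply le_antisymm
      · rw [Submodule.span_le]
        rintro x ⟨v, ⟨k, h, rfl⟩, rfl⟩
        rw [lsh_single, if_pos rfl]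
        rcases h.lt_or_eq with h' | h'
        · rw [sgl_le F (show k ≤ n - 1 by omega)]
          exact Submodule.subset_span ⟨k, by omega, rfl⟩
        · rw [h', sgl_gt F (show n - 1 < n by omega)]
          exact (El F (n - 1)).zero_mem
      · rw [El, Submodule.span_le]
        rintro x ⟨k, h, rfl⟩
        apply Submodule.subset_span
        refine ⟨Finsupp.single (⟨(k, n), by omega⟩ : SegN) 1, ⟨k, by omega, rfl⟩, ?_⟩
        rw [lsh_single, if_pos rfl, sgl_le F h]
    · apply le_antisymm
      · rintro v ⟨hker, hEl⟩
        have key : ∀ w ∈ El F n, linv F n (lsh F n w) +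
            (w ⟨(n, n), le_refl n⟩) • Finsupp.single (⟨(n, n), le_refl n⟩ : SegN) (1 : F) = w := by
          intro w hw
          induction hw using Submodule.span_induction with
          | mem x hx =>
            obtain ⟨k, h, rfl⟩ := hx
            rw [lsh_single, if_pos rfl]
            rcases h.lt_or_eq with h' | h'
            · rw [sgl_le F (show k ≤ n - 1 by omega), linv_single, if_pos rfl, sgl_le F h,
                Finsupp.single_eq_of_ne (fun hc => by simp at hc; omega), zero_smul, add_zero]
            · subst h'
              rw [sgl_gt F (Nat.sub_lt (by omega) Nat.one_pos), map_zero, zero_add,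
                Finsupp.single_eq_same, one_smul]
          | zero => simp
          | add x y hx hy ihx ihy =>
            rw [map_add, map_add, Finsupp.add_apply, add_smul]
            rw [show linv F n (lsh F n x) + linv F n (lsh F n y) +
              ((x ⟨(n,n), le_refl n⟩) • Finsupp.single (⟨(n,n), le_refl n⟩ : SegN) (1:F) +
               (y ⟨(n,n), le_refl n⟩) • Finsupp.single (⟨(n,n), le_refl n⟩ : SegN) (1:F)) =
              (linv F n (lsh F n x) +
               (x ⟨(n,n), le_refl n⟩) • Finsupp.single (⟨(n,n), le_refl n⟩ : SegN) (1:F)) +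
              (linv F n (lsh F n y) +
               (y ⟨(n,n), le_refl n⟩) • Finsupp.single (⟨(n,n), le_refl n⟩ : SegN) (1:F)) from by
              abel]
            rw [ihx, ihy]
          | smul a x hx ih =>
            rw [map_smul, map_smul, Finsupp.smul_apply, smul_eq_mul, mul_smul, ← smul_add, ih]
        have hkey := key v hEl
        rw [LinearMap.mem_ker.mp hker, map_zero, zero_add] at hkey
        rw [diagLine]
        exact hkey ▸ Submodule.smul_mem _ _ (Submodule.mem_span_singleton_self _)
      · rw [diagLine, Submodule.span_le, Set.singleton_subset_iff]
        refine Submodule.mem_inf.mpr ⟨?_, ?_⟩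
        · exact LinearMap.mem_ker.mpr
            (by rw [lsh_single, if_pos rfl, sgl_gt F (show n - 1 < n by omega)])
        · exact Submodule.subset_span ⟨n, le_refl n, rfl⟩
    · intro v hv
      induction hv using Submodule.span_induction with
      | mem x hx =>
        obtain ⟨k, h, rfl⟩ := hx
        rw [lsh_single, if_pos rfl, ← sgl_le F h, Δ_sgl, Δ_sgl, map_sum]
        have split : Finset.Icc k n = insert n (Finset.Icc k (n - 1)) := by
          ext z
          simp only [Finset.mem_Icc, Finset.mem_insert]
          omega
        have hnotmem : n ∉ Finset.Icc k (n - 1) := by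
          simp only [Finset.mem_Icc, not_and]
          intro _
          omega
        rw [split, Finset.sum_insert hnotmem, LinearMap.lTensor_tmul,
          lsh_sgl F n n n hn, if_pos rfl, sgl_gt F (show n - 1 < n by omega), tmul_zero, zero_add]
        refine Finset.sum_congr rfl fun z hz => ?_
        rw [LinearMap.lTensor_tmul, lsh_sgl F n z n hn, if_pos rfl]
      | zero => simp
      | add x y hx hy ihx ihy => simp only [map_add, ihx, ihy]
      | smul a x hx ih => simp only [map_smul, ih]
end
end

section
/- Let C be the divided power coalgebra over a field F, with basis (c_n)_{n≥0}, Δ(c_n) = Σ_{i+j=n} c_i⊗c_j, ε(c_n) = δ_{0,n}, and let H be the coalgebra with basis {c_n, x_n (n≥0), t} with Δ(c_n) = Σ_{i+j=n} c_i⊗c_j, Δ(x_n) = Σ_{i+j=n} c_i⊗x_j + x_n⊗t, Δ(t) = t⊗t, ε(c_n) = δ_{0,n}, ε(t) = 1, ε(x_n) = 0. Then H is a coassociative counital coalgebra, and F·t is a one-dimensional (simple) right subcomodule of H which is a direct summand of H as right comodules, with complement spanned by {(c_n)_n, (x_n)_n}. -/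
set_option synthInstance.maxHeartbeats 800000
set_option maxHeartbeats 1600000

open TensorProduct

noncomputable section

variable (F : Type*) [Field F]

/-- The basis of `H`: elements `c_n`, `x_n` (`n ≥ 0`) and `t`. -/
abbrev HBasis := ℕ ⊕ ℕ ⊕ Unit

def cb (n : ℕ) : HBasis := Sum.inl n
def xb (n : ℕ) : HBasis := Sum.inr (Sum.inl n)
def tb : HBasis := Sum.inr (Sum.inr ())

/-- The underlying vector space of `H`, with basis `{c_n, x_n, t}`. -/
abbrev HSp := HBasis →₀ F

/-- The comultiplication of `H`: `Δ(c_n) = Σ_{i+j=n} c_i ⊗ c_j`,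
`Δ(x_n) = Σ_{i+j=n} c_i ⊗ x_j + x_n ⊗ t`, `Δ(t) = t ⊗ t`. -/
def ΔH : HSp F →ₗ[F] HSp F ⊗[F] HSp F :=
  Finsupp.lift _ F _ fun b =>
    match b with
    | Sum.inl n => ∑ i ∈ Finset.range (n + 1),
        Finsupp.single (cb i) (1 : F) ⊗ₜ[F] Finsupp.single (cb (n - i)) (1 : F)
    | Sum.inr (Sum.inl n) =>
        (∑ i ∈ Finset.range (n + 1),
          Finsupp.single (cb i) (1 : F) ⊗ₜ[F] Finsupp.single (xb (n - i)) (1 : F)) +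
        Finsupp.single (xb n) (1 : F) ⊗ₜ[F] Finsupp.single tb (1 : F)
    | Sum.inr (Sum.inr _) => Finsupp.single tb (1 : F) ⊗ₜ[F] Finsupp.single tb (1 : F)

/-- The counit of `H`: `ε(c_n) = δ_{0,n}`, `ε(x_n) = 0`, `ε(t) = 1`. -/
def εH : HSp F →ₗ[F] F :=
  Finsupp.lift _ F _ fun b =>
    match b with
    | Sum.inl n => if n = 0 then (1 : F) else 0
    | Sum.inr (Sum.inl _) => 0
    | Sum.inr (Sum.inr _) => 1

/-- The line `F·t`. -/
def Tline : Submodule F (HSp F) := Submodule.span F {Finsupp.single tb (1 : F)}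

/-- The span of the `c_n`'s and `x_n`'s. -/
def Scomp : Submodule F (HSp F) :=
  Submodule.span F
    {v : HSp F | (∃ n, v = Finsupp.single (cb n) (1 : F)) ∨
      (∃ n, v = Finsupp.single (xb n) (1 : F))}

/-- `V` is a right subcomodule of `H`: `Δ(V) ⊆ V ⊗ H`. -/
def IsRightSubcomoduleH (V : Submodule F (HSp F)) : Prop :=
  ∀ v ∈ V, ΔH F v ∈ LinearMap.range (LinearMap.rTensor (HSp F) V.subtype)

/-! ### Auxiliary lemmas -/

lemma ΔH_c (n : ℕ) : ΔH F (Finsupp.single (cb n) 1) =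
    ∑ i ∈ Finset.range (n + 1),
        Finsupp.single (cb i) (1 : F) ⊗ₜ[F] Finsupp.single (cb (n - i)) (1 : F) := by
  simp [ΔH, Finsupp.lift_apply, Finsupp.sum_single_index, cb]

lemma ΔH_x (n : ℕ) : ΔH F (Finsupp.single (xb n) 1) =
    (∑ i ∈ Finset.range (n + 1),
          Finsupp.single (cb i) (1 : F) ⊗ₜ[F] Finsupp.single (xb (n - i)) (1 : F)) +
        Finsupp.single (xb n) (1 : F) ⊗ₜ[F] Finsupp.single tb (1 : F) := by
  simp [ΔH, Finsupp.lift_apply, Finsupp.sum_single_index, xb]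

lemma ΔH_t : ΔH F (Finsupp.single tb 1) =
    Finsupp.single tb (1 : F) ⊗ₜ[F] Finsupp.single tb (1 : F) := by
  simp [ΔH, Finsupp.lift_apply, Finsupp.sum_single_index, tb]

lemma εH_c (n : ℕ) : εH F (Finsupp.single (cb n) 1) = if n = 0 then 1 else 0 := by
  simp [εH, Finsupp.lift_apply, Finsupp.sum_single_index, cb]
lemma εH_x (n : ℕ) : εH F (Finsupp.single (xb n) 1) = 0 := by
  simp [εH, Finsupp.lift_apply, Finsupp.sum_single_index, xb]
lemma εH_t : εH F (Finsupp.single tb 1) = 1 := by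
  simp [εH, Finsupp.lift_apply, Finsupp.sum_single_index, tb]

lemma triple_sum {M : Type*} [AddCommMonoid M] (n : ℕ) (f : ℕ → ℕ → ℕ → M) :
    ∑ i ∈ Finset.range (n+1), ∑ j ∈ Finset.range (i+1), f j (i-j) (n-i)
    = ∑ i ∈ Finset.range (n+1), ∑ j ∈ Finset.range (n-i+1), f i j (n-i-j) := by
  rw [Finset.sum_sigma', Finset.sum_sigma']
  refine Finset.sum_nbij' (fun p => ⟨p.2, p.1 - p.2⟩) (fun p => ⟨p.1 + p.2, p.1⟩) ?_ ?_ ?_ ?_ ?_ <;>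
    rintro ⟨i, j⟩ h <;> simp [Finset.mem_sigma, Finset.mem_range] at * <;> try omega
  congr 1
  omega

lemma coassoc_single (b : HBasis) :
    (TensorProduct.assoc F (HSp F) (HSp F) (HSp F))
      ((ΔH F).rTensor (HSp F) (ΔH F (Finsupp.single b 1)))
    = (ΔH F).lTensor (HSp F) (ΔH F (Finsupp.single b 1)) := by
  obtain n | n | u := b
  · show _ = (ΔH F).lTensor (HSp F) (ΔH F (Finsupp.single (cb n) 1))
    rw [show (Sum.inl n : HBasis) = cb n from rfl, ΔH_c]
    simp only [map_sum, LinearMap.rTensor_tmul, LinearMap.lTensor_tmul, ΔH_c, sum_tmul,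
      tmul_sum, assoc_tmul]
    exact triple_sum n fun a b c =>
      Finsupp.single (cb a) (1:F) ⊗ₜ (Finsupp.single (cb b) (1:F) ⊗ₜ Finsupp.single (cb c) (1:F))
  · rw [show (Sum.inr (Sum.inl n) : HBasis) = xb n from rfl, ΔH_x]
    simp only [map_add, map_sum, LinearMap.rTensor_tmul, LinearMap.lTensor_tmul, ΔH_c, ΔH_x,
      ΔH_t, sum_tmul, tmul_sum, tmul_add, add_tmul, assoc_tmul, map_sum]
    rw [triple_sum n fun a b c =>
      Finsupp.single (cb a) (1:F) ⊗ₜ (Finsupp.single (cb b) (1:F) ⊗ₜ Finsupp.single (xb c) (1:F)),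
      Finset.sum_add_distrib]
    abel
  · rw [show (Sum.inr (Sum.inr u) : HBasis) = tb from rfl, ΔH_t]
    simp only [LinearMap.rTensor_tmul, LinearMap.lTensor_tmul, ΔH_t, assoc_tmul]

lemma rTensor_counit_single (b : HBasis) :
    (εH F).rTensor (HSp F) (ΔH F (Finsupp.single b 1))
    = (1 : F) ⊗ₜ Finsupp.single b (1 : F) := by
  obtain n | n | u := b
  · rw [show (Sum.inl n : HBasis) = cb n from rfl, ΔH_c]
    simp only [map_sum, LinearMap.rTensor_tmul, εH_c]
    rw [Finset.sum_eq_single_of_mem 0 (by simp)]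
    · simp
    · intro i _ hi; simp [hi]
  · rw [show (Sum.inr (Sum.inl n) : HBasis) = xb n from rfl, ΔH_x]
    simp only [map_add, map_sum, LinearMap.rTensor_tmul, εH_c, εH_x]
    rw [Finset.sum_eq_single_of_mem 0 (by simp)]
    · simp
    · intro i _ hi; simp [hi]
  · rw [show (Sum.inr (Sum.inr u) : HBasis) = tb from rfl, ΔH_t]
    simp [LinearMap.rTensor_tmul, εH_t]

lemma lTensor_counit_single (b : HBasis) :
    (εH F).lTensor (HSp F) (ΔH F (Finsupp.single b 1))
    = Finsupp.single b (1 : F) ⊗ₜ (1 : F) := by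
  obtain n | n | u := b
  · rw [show (Sum.inl n : HBasis) = cb n from rfl, ΔH_c]
    simp only [map_sum, LinearMap.lTensor_tmul, εH_c]
    rw [Finset.sum_eq_single_of_mem n (by simp)]
    · simp
    · intro i hi hin
      rw [Finset.mem_range] at hi
      rw [if_neg (by omega)]
      simp
  · rw [show (Sum.inr (Sum.inl n) : HBasis) = xb n from rfl, ΔH_x]
    simp only [map_add, map_sum, LinearMap.lTensor_tmul, εH_x, εH_t]
    simp
  · rw [show (Sum.inr (Sum.inr u) : HBasis) = tb from rfl, ΔH_t]
    simp [LinearMap.lTensor_tmul, εH_t]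

def coalgH : Coalgebra F (HSp F) where
  comul := ΔH F
  counit := εH F
  coassoc := by
    apply Finsupp.lhom_ext
    intro a r
    have : (Finsupp.single a r : HSp F) = r • Finsupp.single a 1 := by
      rw [Finsupp.smul_single, smul_eq_mul, mul_one]
    rw [this]
    simp only [LinearMap.comp_apply, map_smul]
    exact congrArg (r • ·) (coassoc_single F a)
  rTensor_counit_comp_comul := by
    apply Finsupp.lhom_ext
    intro a r
    have : (Finsupp.single a r : HSp F) = r • Finsupp.single a 1 := by
      rw [Finsupp.smul_single, smul_eq_mul, mul_one]
    rw [this]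
    simp only [LinearMap.comp_apply, map_smul]
    rw [rTensor_counit_single]
    simp
  lTensor_counit_comp_comul := by
    apply Finsupp.lhom_ext
    intro a r
    have : (Finsupp.single a r : HSp F) = r • Finsupp.single a 1 := by
      rw [Finsupp.smul_single, smul_eq_mul, mul_one]
    rw [this]
    simp only [LinearMap.comp_apply, map_smul]
    rw [lTensor_counit_single]
    simp

lemma subcomodule_of_span (s : Set (HSp F))
    (h : ∀ v ∈ s, ΔH F v ∈
      LinearMap.range (LinearMap.rTensor (HSp F) (Submodule.span F s).subtype)) :
    IsRightSubcomoduleH F (Submodule.span F s) := by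
  intro v hv
  induction hv using Submodule.span_induction with
  | mem v hv => exact h v hv
  | zero => simp
  | add x y _ _ hx hy => rw [map_add]; exact add_mem hx hy
  | smul a x _ hx => rw [map_smul]; exact Submodule.smul_mem _ a hx

lemma mem_Scomp_c (n : ℕ) : Finsupp.single (cb n) (1 : F) ∈ Scomp F :=
  Submodule.subset_span (Or.inl ⟨n, rfl⟩)
lemma mem_Scomp_x (n : ℕ) : Finsupp.single (xb n) (1 : F) ∈ Scomp F :=
  Submodule.subset_span (Or.inr ⟨n, rfl⟩)

lemma Scomp_le_supported : Scomp F ≤ Finsupp.supported F F {b | b ≠ tb} := by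
  apply Submodule.span_le.2
  rintro v (⟨n, rfl⟩ | ⟨n, rfl⟩) <;>
    exact Finsupp.single_mem_supported F 1 (by simp [cb, xb, tb])

/-- `H` is a coassociative counital coalgebra, and `F·t` is a
one-dimensional right subcomodule of `H` which is a direct summand of `H` as right
comodules, with complement spanned by the `c_n`'s and `x_n`'s. -/
theorem statement18 :
    (∃ inst : Coalgebra F (HSp F), inst.comul = ΔH F ∧ inst.counit = εH F) ∧
    IsRightSubcomoduleH F (Tline F) ∧
    Module.finrank F (Tline F) = 1 ∧
    IsRightSubcomoduleH F (Scomp F) ∧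
    IsCompl (Tline F) (Scomp F) := by
  refine ⟨⟨coalgH F, rfl, rfl⟩, ?_, ?_, ?_, ?_⟩
  · apply subcomodule_of_span
    rintro v rfl
    refine ⟨⟨Finsupp.single tb 1, Submodule.subset_span rfl⟩ ⊗ₜ Finsupp.single tb 1, ?_⟩
    rw [LinearMap.rTensor_tmul, ΔH_t]
    rfl
  · rw [Tline]
    exact finrank_span_singleton (fun h => one_ne_zero (Finsupp.single_eq_zero.1 h))
  · apply subcomodule_of_span
    rintro v (⟨n, rfl⟩ | ⟨n, rfl⟩)
    · refine ⟨∑ i ∈ Finset.range (n+1),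
        (⟨Finsupp.single (cb i) 1, mem_Scomp_c F i⟩ : Scomp F) ⊗ₜ
          Finsupp.single (cb (n-i)) (1:F), ?_⟩
      rw [map_sum, ΔH_c]
      refine Finset.sum_congr rfl fun i _ => ?_
      exact LinearMap.rTensor_tmul ..
    · refine ⟨(∑ i ∈ Finset.range (n+1),
        (⟨Finsupp.single (cb i) 1, mem_Scomp_c F i⟩ : Scomp F) ⊗ₜ
          Finsupp.single (xb (n-i)) (1:F)) +
        (⟨Finsupp.single (xb n) 1, mem_Scomp_x F n⟩ : Scomp F) ⊗ₜ[F]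
          Finsupp.single tb (1:F), ?_⟩
      rw [ΔH_x]
      refine (map_add _ _ _).trans (congrArg₂ (· + ·)
        ((map_sum _ _ _).trans (Finset.sum_congr rfl fun i _ => ?_)) ?_) <;>
        exact LinearMap.rTensor_tmul ..
  · constructor
    · rw [Submodule.disjoint_def]
      intro v hvT hvS
      obtain ⟨a, rfl⟩ := Submodule.mem_span_singleton.1 hvT
      have hs := Scomp_le_supported F hvS
      rw [Finsupp.mem_supported] at hs
      have htb : (a • Finsupp.single tb (1:F)) tb = 0 := by
        by_contra h
        exact absurd (hs (Finsupp.mem_support_iff.2 h)) (by simp)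
      simp only [Finsupp.smul_apply, Finsupp.single_eq_same, smul_eq_mul, mul_one] at htb
      rw [htb, zero_smul]
    · rw [codisjoint_iff, eq_top_iff, ← Finsupp.supported_univ,
        Finsupp.supported_eq_span_single]
      apply Submodule.span_le.2
      rintro _ ⟨b, -, rfl⟩
      obtain n | n | u := b
      · exact Submodule.mem_sup_right (mem_Scomp_c F n)
      · exact Submodule.mem_sup_right (mem_Scomp_x F n)
      · exact Submodule.mem_sup_left (Submodule.subset_span rfl)
end
end
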